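/- arXiv:2010.04756 — 2 statements merged into one kernel-verified Lean document; each statement's English description precedes it below -/
import Mathlib

section
/- The two-stage Rosenbrock scheme ROS2 is second-order consistent for any choice of Â: for the ODE y' = f(t,y) with f smooth, the one-step update y_{n+1} = y_n + (3/2)Δt k₁ + (1/2)Δt k₂, where (I − γΔt Â)k₁ = f(t_n, y_n) and (I − γΔt Â)k₂ = f(t_{n+1}, y_n + Δt k₁) − 2k₁, satisfies ‖y(t_n + Δt) − y_{n+1}‖ = O(Δt³) as Δt → 0 whenever y_n = y(t_n), provided I − γΔt Â is invertible. -/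
open scoped Matrix

open Matrix Set Asymptotics

lemma isBigO_cube_of_contDiffAt {E : Type*} [NormedAddCommGroup E] [NormedSpace ℝ E]
    {g : ℝ → E} (hg : ContDiffAt ℝ 3 g 0)
    (h0 : g 0 = 0) (h1 : iteratedDeriv 1 g 0 = 0) (h2 : iteratedDeriv 2 g 0 = 0) :
    g =O[nhdsWithin 0 (Set.Ioi 0)] fun x : ℝ => x ^ 3 := by
  obtain ⟨u, hu, hgu⟩ := hg.contDiffOn le_rfl (by simp)
  obtain ⟨ε, hε, hball⟩ := Metric.mem_nhds_iff.1 hu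
  set δ := ε / 2 with hδdef
  have hδ : 0 < δ := by positivity
  have hIccBall : Icc (0:ℝ) δ ⊆ Metric.ball 0 ε := by
    intro x hx
    have hx1 : |x| ≤ δ := by
      rw [abs_le]; exact ⟨by linarith [hx.1], hx.2⟩
    have : |x| < ε := lt_of_le_of_lt hx1 (by rw [hδdef]; linarith)
    simpa [Metric.mem_ball, Real.dist_eq] using this
  have hgB : ContDiffOn ℝ 3 g (Metric.ball (0:ℝ) ε) := hgu.mono hball
  have hgI : ContDiffOn ℝ 3 g (Icc 0 δ) := hgB.mono hIccBall
  -- iterated derivatives within `Icc 0 δ` at `0` agree with the global ones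
  have hID : ∀ i : ℕ, i ≤ 3 → iteratedDerivWithin i g (Icc 0 δ) 0 = iteratedDeriv i g 0 := by
    intro i hi
    have hp : HasFTaylorSeriesUpToOn 3 g (ftaylorSeriesWithin ℝ g (Metric.ball (0:ℝ) ε))
        (Metric.ball (0:ℝ) ε) :=
      hgB.ftaylorSeriesWithin Metric.isOpen_ball.uniqueDiffOn
    have hq := hp.mono hIccBall
    have h0mem : (0:ℝ) ∈ Icc (0:ℝ) δ := left_mem_Icc.2 hδ.le
    have heq := hq.eq_iteratedFDerivWithin_of_uniqueDiffOn (by exact_mod_cast hi)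
      (uniqueDiffOn_Icc hδ) h0mem
    have h0ball : (0:ℝ) ∈ Metric.ball (0:ℝ) ε := by simpa using hε
    have hglobal : ftaylorSeriesWithin ℝ g (Metric.ball (0:ℝ) ε) 0 i = iteratedFDeriv ℝ i g 0 := by
      show iteratedFDerivWithin ℝ i g (Metric.ball (0:ℝ) ε) 0 = iteratedFDeriv ℝ i g 0
      exact iteratedFDerivWithin_of_isOpen i Metric.isOpen_ball h0ball
    rw [iteratedDerivWithin_eq_iteratedFDerivWithin, iteratedDeriv_eq_iteratedFDeriv,
      ← heq, hglobal]
  obtain ⟨C, hC⟩ := exists_taylor_mean_remainder_bound (n := 2) hδ.le (by exact_mod_cast hgI)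
  have hT : ∀ x : ℝ, taylorWithinEval g 2 (Icc 0 δ) 0 x = 0 := by
    intro x
    rw [taylor_within_apply]
    apply Finset.sum_eq_zero
    intro i hi
    have hi3 : i ≤ 2 := by
      have := Finset.mem_range.1 hi; omega
    have hz : iteratedDerivWithin i g (Icc 0 δ) 0 = 0 := by
      rw [hID i (by omega)]
      interval_cases i
      · simpa using h0
      · exact h1
      · exact h2
    rw [hz, smul_zero]
  refine IsBigO.of_bound C ?_
  have hmem : Ioc (0:ℝ) δ ∈ nhdsWithin (0:ℝ) (Ioi 0) := Ioc_mem_nhdsGT_of_mem ⟨le_refl 0, hδ⟩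
  filter_upwards [hmem] with x hx
  have hxI : x ∈ Icc (0:ℝ) δ := ⟨hx.1.le, hx.2⟩
  have := hC x hxI
  rw [hT x, sub_zero, sub_zero] at this
  calc ‖g x‖ ≤ C * x ^ (2+1) := this
    _ = C * ‖x ^ 3‖ := by
        rw [norm_pow, Real.norm_eq_abs, abs_of_pos hx.1]


section MatrixCalc

attribute [local instance] Matrix.linftyOpNormedAddCommGroup Matrix.linftyOpNormedRing
  Matrix.linftyOpNormedAlgebra

variable {n : ℕ}

/-- Entry evaluation as a continuous linear map. -/
noncomputable def entryCLM (i j : Fin n) : Matrix (Fin n) (Fin n) ℝ →L[ℝ] ℝ :=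
  LinearMap.toContinuousLinearMap
    { toFun := fun M => M i j
      map_add' := fun _ _ => rfl
      map_smul' := fun _ _ => rfl }

lemma hasDerivAt_entry {M : ℝ → Matrix (Fin n) (Fin n) ℝ} {M' : Matrix (Fin n) (Fin n) ℝ}
    {t : ℝ} (h : HasDerivAt M M' t) (i j : Fin n) :
    HasDerivAt (fun s => M s i j) (M' i j) t := by
  have := (entryCLM i j).hasFDerivAt.comp_hasDerivAt t h
  exact this

lemma contDiffAt_entry {M : ℝ → Matrix (Fin n) (Fin n) ℝ} {t : ℝ} {k : WithTop ℕ∞}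
    (h : ContDiffAt ℝ k M t) (i j : Fin n) :
    ContDiffAt ℝ k (fun s => M s i j) t := by
  have := ((entryCLM i j).contDiff.contDiffAt (x := M t)).comp t h
  exact this

lemma HasDerivAt.mulVec' {M : ℝ → Matrix (Fin n) (Fin n) ℝ} {v : ℝ → Fin n → ℝ}
    {M' : Matrix (Fin n) (Fin n) ℝ} {v' : Fin n → ℝ} {t : ℝ}
    (hM : HasDerivAt M M' t) (hv : HasDerivAt v v' t) :
    HasDerivAt (fun s => (M s).mulVec (v s)) (M'.mulVec (v t) + (M t).mulVec v') t := by
  rw [hasDerivAt_pi]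
  intro i
  simp only [Matrix.mulVec, dotProduct, Pi.add_apply]
  have : HasDerivAt (fun s => ∑ j, M s i j * v s j)
      (∑ j, (M' i j * v t j + M t i j * v' j)) t :=
    HasDerivAt.fun_sum fun j _ => (hasDerivAt_entry hM i j).mul (hasDerivAt_pi.1 hv j)
  simpa [Finset.sum_add_distrib] using this

lemma ContDiffAt.mulVec' {M : ℝ → Matrix (Fin n) (Fin n) ℝ} {v : ℝ → Fin n → ℝ}
    {t : ℝ} {k : WithTop ℕ∞} (hM : ContDiffAt ℝ k M t) (hv : ContDiffAt ℝ k v t) :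
    ContDiffAt ℝ k (fun s => (M s).mulVec (v s)) t := by
  rw [contDiffAt_pi]
  intro i
  simp only [Matrix.mulVec, dotProduct]
  exact ContDiffAt.sum fun j _ => (contDiffAt_entry hM i j).mul
    (((ContinuousLinearMap.proj j : (Fin n → ℝ) →L[ℝ] ℝ).contDiff.contDiffAt).comp t hv)

theorem ros2_main {N : ℕ}
    (f : ℝ → (Fin N → ℝ) → Fin N → ℝ)
    (hf : ContDiff ℝ 3 (Function.uncurry f))
    (Ahat : Matrix (Fin N) (Fin N) ℝ) (γ : ℝ)
    (tn : ℝ) (y : ℝ → Fin N → ℝ)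
    (hy : ∀ t : ℝ, HasDerivAt y (f t (y t)) t) :
    (fun Δt : ℝ =>
      let k1 := ((1 : Matrix (Fin N) (Fin N) ℝ) - (γ * Δt) • Ahat)⁻¹.mulVec (f tn (y tn))
      let k2 := ((1 : Matrix (Fin N) (Fin N) ℝ) - (γ * Δt) • Ahat)⁻¹.mulVec
        (f (tn + Δt) (y tn + Δt • k1) - (2 : ℝ) • k1)
      y (tn + Δt) - (y tn + (3 / 2 * Δt) • k1 + (1 / 2 * Δt) • k2))
      =O[nhdsWithin 0 (Set.Ioi 0)] fun Δt : ℝ => Δt ^ 3 := by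
  -- abbreviations
  set F : Fin N → ℝ := f tn (y tn) with hF
  set A : Matrix (Fin N) (Fin N) ℝ := γ • Ahat with hA
  set B : ℝ → Matrix (Fin N) (Fin N) ℝ := fun Δt => 1 - (γ * Δt) • Ahat with hB
  set m : ℝ → Matrix (Fin N) (Fin N) ℝ := fun Δt => Ring.inverse (B Δt) with hm
  set k1 : ℝ → Fin N → ℝ := fun Δt => (m Δt).mulVec F with hk1
  set gg : ℝ → Fin N → ℝ := fun Δt => f (tn + Δt) (y tn + Δt • k1 Δt) with hgg
  set vv : ℝ → Fin N → ℝ := fun Δt => gg Δt - (2 : ℝ) • k1 Δt with hvv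
  set k2 : ℝ → Fin N → ℝ := fun Δt => (m Δt).mulVec (vv Δt) with hk2
  set E : ℝ → Fin N → ℝ := fun Δt =>
    y (tn + Δt) - (y tn + (3 / 2 * Δt) • k1 Δt + (1 / 2 * Δt) • k2 Δt) with hE
  -- the function in the statement is `E`
  have hEeq : (fun Δt : ℝ =>
      let k1 := ((1 : Matrix (Fin N) (Fin N) ℝ) - (γ * Δt) • Ahat)⁻¹.mulVec (f tn (y tn))
      let k2 := ((1 : Matrix (Fin N) (Fin N) ℝ) - (γ * Δt) • Ahat)⁻¹.mulVec
        (f (tn + Δt) (y tn + Δt • k1) - (2 : ℝ) • k1)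
      y (tn + Δt) - (y tn + (3 / 2 * Δt) • k1 + (1 / 2 * Δt) • k2)) = E := by
    funext Δt
    simp only [hE, hk2, hvv, hgg, hk1, hm, hB, hF, Matrix.nonsing_inv_eq_ringInverse]
  rw [hEeq]
  -- smoothness of `y`
  have hyd : Differentiable ℝ y := fun t => (hy t).differentiableAt
  have hy' : deriv y = fun t => f t (y t) := funext fun t => (hy t).deriv
  have curve : ∀ {k : WithTop ℕ∞}, ContDiff ℝ k y → k ≤ 3 →
      ContDiff ℝ k fun t => f t (y t) := by
    intro k h hk
    exact (hf.of_le hk).comp (contDiff_id.prodMk h)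
  have hy0 : ContDiff ℝ 0 y := contDiff_zero.2 hyd.continuous
  have hy1 : ContDiff ℝ 1 y :=
    contDiff_one_iff_deriv.2 ⟨hyd, by rw [hy']; exact (curve hy0 (by norm_num)).continuous⟩
  have hy2 : ContDiff ℝ 2 y := by
    rw [show (2 : WithTop ℕ∞) = 1 + 1 by norm_num, contDiff_succ_iff_deriv]
    exact ⟨hyd, by simp, by rw [hy']; exact curve hy1 (by norm_num)⟩
  have hy3 : ContDiff ℝ 3 y := by
    rw [show (3 : WithTop ℕ∞) = 2 + 1 by norm_num, contDiff_succ_iff_deriv]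
    exact ⟨hyd, by simp, by rw [hy']; exact curve hy2 (by norm_num)⟩
  -- facts about `B` and `m`
  have hB0 : B 0 = 1 := by simp [hB]
  have hBd : ∀ t : ℝ, HasDerivAt B (-A) t := by
    intro t
    have h1 : HasDerivAt (fun s : ℝ => (γ * s) • Ahat) ((γ * 1) • Ahat) t :=
      ((hasDerivAt_id t).const_mul γ).smul_const Ahat
    have h2 := (hasDerivAt_const t (1 : Matrix (Fin N) (Fin N) ℝ)).sub h1
    simp [hA, hB] at h2
    exact h2
  have hBc : ∀ t : ℝ, ContinuousAt B t := fun t => (hBd t).continuousAt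
  have hunit : ∀ᶠ Δt in nhds (0 : ℝ), IsUnit (B Δt) := by
    have h1 : {x : Matrix (Fin N) (Fin N) ℝ | IsUnit x} ∈ nhds (B 0) :=
      Units.isOpen.mem_nhds (by rw [hB0]; exact isUnit_one)
    exact (hBc 0) h1
  have hmd : ∀ᶠ Δt in nhds (0 : ℝ), HasDerivAt m (m Δt * A * m Δt) Δt := by
    filter_upwards [hunit] with t ht
    obtain ⟨u, hu⟩ := ht
    have h1 : HasFDerivAt Ring.inverse
        (-ContinuousLinearMap.mulLeftRight ℝ _ (↑u⁻¹) (↑u⁻¹)) (B t) :=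
      hu ▸ hasFDerivAt_ringInverse u
    have h2 := h1.comp_hasDerivAt t (hBd t)
    have hui : (↑u⁻¹ : Matrix (Fin N) (Fin N) ℝ) = m t := by
      show (↑u⁻¹ : Matrix (Fin N) (Fin N) ℝ) = Ring.inverse (B t)
      rw [← hu, Ring.inverse_unit]
    refine h2.congr_deriv ?_
    simp only [ContinuousLinearMap.neg_apply, ContinuousLinearMap.mulLeftRight_apply, hui]
    simp [mul_neg, neg_mul]
  have hm0 : m 0 = 1 := by
    show Ring.inverse (B 0) = 1
    rw [hB0, Ring.inverse_one]
  have hm_cd : ContDiffAt ℝ 3 m 0 := by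
    have hBcd : ContDiff ℝ 3 B := by
      rw [hB]
      exact contDiff_const.sub ((contDiff_const.mul contDiff_id).smul contDiff_const)
    have h1 : ContDiffAt ℝ 3 (Ring.inverse : Matrix (Fin N) (Fin N) ℝ → _) (B 0) := by
      rw [hB0]
      simpa using contDiffAt_ringInverse ℝ (1 : (Matrix (Fin N) (Fin N) ℝ)ˣ)
    exact h1.comp 0 hBcd.contDiffAt
  -- derivative functions
  set k1d : ℝ → Fin N → ℝ := fun Δt => (m Δt * A * m Δt).mulVec F with hk1dd
  set c : ℝ → ℝ × (Fin N → ℝ) := fun Δt => (tn + Δt, y tn + Δt • k1 Δt) with hcc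
  set ggd : ℝ → Fin N → ℝ := fun Δt =>
    fderiv ℝ (Function.uncurry f) (c Δt) (1, k1 Δt + Δt • k1d Δt) with hggdd
  set vvd : ℝ → Fin N → ℝ := fun Δt => ggd Δt - (2 : ℝ) • k1d Δt with hvvdd
  set k2d : ℝ → Fin N → ℝ := fun Δt =>
    (m Δt * A * m Δt).mulVec (vv Δt) + (m Δt).mulVec (vvd Δt) with hk2dd
  set Ed : ℝ → Fin N → ℝ := fun t => f (tn + t) (y (tn + t)) -
    (((3 / 2 : ℝ) • k1 t + (3 / 2 * t) • k1d t) +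
      ((1 / 2 : ℝ) • k2 t + (1 / 2 * t) • k2d t)) with hEd
  -- eventual derivatives
  have hk1dev : ∀ᶠ t in nhds (0 : ℝ), HasDerivAt k1 (k1d t) t := by
    filter_upwards [hmd] with t ht
    have := ht.mulVec' (hasDerivAt_const t F)
    simpa [Matrix.mulVec_zero] using this
  have hyc : ∀ t : ℝ, HasDerivAt (fun s => y (tn + s)) (f (tn + t) (y (tn + t))) t := by
    intro t
    have h1 : HasDerivAt (fun s : ℝ => tn + s) 1 t := by
      simpa using (hasDerivAt_id t).const_add tn
    have := HasDerivAt.scomp t (hy (tn + t)) h1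
    simp only [one_smul] at this
    exact this
  have hccurve : ∀ᶠ t in nhds (0 : ℝ), HasDerivAt c (1, k1 t + t • k1d t) t := by
    filter_upwards [hk1dev] with t ht
    have h1 : HasDerivAt (fun s : ℝ => tn + s) 1 t := by
      simpa using (hasDerivAt_id t).const_add tn
    have h2 : HasDerivAt (fun s : ℝ => y tn + s • k1 s) (k1 t + t • k1d t) t := by
      have h := (hasDerivAt_const t (y tn)).add ((hasDerivAt_id t).smul ht)
      simp only [id_eq] at h
      refine h.congr_deriv ?_
      module
    exact h1.prodMk h2
  have hfdiff : Differentiable ℝ (Function.uncurry f) := hf.differentiable (by norm_num)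
  have hggdev : ∀ᶠ t in nhds (0 : ℝ), HasDerivAt gg (ggd t) t := by
    filter_upwards [hccurve] with t ht
    have := (hfdiff (c t)).hasFDerivAt.comp_hasDerivAt t ht
    exact this
  have hvvdev : ∀ᶠ t in nhds (0 : ℝ), HasDerivAt vv (vvd t) t := by
    filter_upwards [hggdev, hk1dev] with t h1 h2
    exact h1.sub (h2.const_smul (2 : ℝ))
  have hk2dev : ∀ᶠ t in nhds (0 : ℝ), HasDerivAt k2 (k2d t) t := by
    filter_upwards [hmd, hvvdev] with t h1 h2
    exact h1.mulVec' h2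
  have hEdev : ∀ᶠ t in nhds (0 : ℝ), HasDerivAt E (Ed t) t := by
    filter_upwards [hk1dev, hk2dev] with t h1 h2
    have t1 : HasDerivAt (fun s => (3 / 2 * s) • k1 s)
        ((3 / 2 : ℝ) • k1 t + (3 / 2 * t) • k1d t) t := by
      have h := ((hasDerivAt_id t).const_mul (3 / 2 : ℝ)).smul h1
      simp only [id_eq] at h
      refine h.congr_deriv ?_
      module
    have t2 : HasDerivAt (fun s => (1 / 2 * s) • k2 s)
        ((1 / 2 : ℝ) • k2 t + (1 / 2 * t) • k2d t) t := by
      have h := ((hasDerivAt_id t).const_mul (1 / 2 : ℝ)).smul h2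
      simp only [id_eq] at h
      refine h.congr_deriv ?_
      module
    have h := (hyc t).sub (((hasDerivAt_const t (y tn)).add t1).add t2)
    have hv : Ed t = f (tn + t) (y (tn + t)) -
        ((0 + ((3 / 2 : ℝ) • k1 t + (3 / 2 * t) • k1d t)) +
          ((1 / 2 : ℝ) • k2 t + (1 / 2 * t) • k2d t)) := by
      show f (tn + t) (y (tn + t)) -
        (((3 / 2 : ℝ) • k1 t + (3 / 2 * t) • k1d t) +
          ((1 / 2 : ℝ) • k2 t + (1 / 2 * t) • k2d t)) = _
      rw [zero_add]
    rw [hv]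
    exact h
  -- values at 0
  have hk10 : k1 0 = F := by
    show (m 0).mulVec F = F
    rw [hm0, Matrix.one_mulVec]
  have hk1d0 : k1d 0 = A.mulVec F := by
    show (m 0 * A * m 0).mulVec F = _
    rw [hm0, one_mul, mul_one]
  have hgg0 : gg 0 = F := by
    show f (tn + 0) (y tn + (0 : ℝ) • k1 0) = F
    simp [hF]
  have hvv0 : vv 0 = -F := by
    show gg 0 - (2 : ℝ) • k1 0 = -F
    rw [hgg0, hk10]
    module
  have hk20 : k2 0 = -F := by
    show (m 0).mulVec (vv 0) = -F
    rw [hm0, Matrix.one_mulVec, hvv0]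
  set w : Fin N → ℝ := fderiv ℝ (Function.uncurry f) (tn, y tn) (1, F) with hw
  have hc0 : c 0 = (tn, y tn) := by
    show (tn + 0, y tn + (0 : ℝ) • k1 0) = _
    simp
  have hggd0 : ggd 0 = w := by
    show fderiv ℝ (Function.uncurry f) (c 0) (1, k1 0 + (0 : ℝ) • k1d 0) = w
    rw [hc0, hk10]
    simp [hw]
  have hvvd0 : vvd 0 = w - (2 : ℝ) • A.mulVec F := by
    show ggd 0 - (2 : ℝ) • k1d 0 = _
    rw [hggd0, hk1d0]
  have hk2d0 : k2d 0 = w - (3 : ℝ) • A.mulVec F := by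
    show (m 0 * A * m 0).mulVec (vv 0) + (m 0).mulVec (vvd 0) = _
    rw [hm0, one_mul, mul_one, hvv0, hvvd0, Matrix.one_mulVec, Matrix.mulVec_neg]
    module
  have hEd0 : Ed 0 = 0 := by
    show f (tn + 0) (y (tn + 0)) -
      (((3 / 2 : ℝ) • k1 0 + (3 / 2 * 0) • k1d 0) +
        ((1 / 2 : ℝ) • k2 0 + (1 / 2 * 0) • k2d 0)) = 0
    have e1 : f (tn + 0) (y (tn + 0)) = F := by rw [add_zero]
    rw [hk10, hk20, e1]
    module
  have hE0 : E 0 = 0 := by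
    show y (tn + 0) - (y tn + (3 / 2 * 0 : ℝ) • k1 0 + (1 / 2 * 0 : ℝ) • k2 0) = 0
    simp
  -- smoothness of E at 0
  have hk1cd : ContDiffAt ℝ 3 k1 0 := hm_cd.mulVec' contDiffAt_const
  have hccd : ContDiffAt ℝ 3 c 0 :=
    (contDiffAt_const.add contDiffAt_id).prodMk
      (contDiffAt_const.add (contDiffAt_id.smul hk1cd))
  have hggcd : ContDiffAt ℝ 3 gg 0 := by
    have h1 : ContDiffAt ℝ 3 (Function.uncurry f) (c 0) := hf.contDiffAt
    exact h1.comp 0 hccd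
  have hvvcd : ContDiffAt ℝ 3 vv 0 := hggcd.sub (hk1cd.const_smul (2 : ℝ))
  have hk2cd : ContDiffAt ℝ 3 k2 0 := hm_cd.mulVec' hvvcd
  have hEcd : ContDiffAt ℝ 3 E 0 := by
    have h1 : ContDiffAt ℝ 3 (fun t => y (tn + t)) 0 :=
      (hy3.comp (contDiff_const.add contDiff_id)).contDiffAt
    exact h1.sub ((contDiffAt_const.add
      ((contDiffAt_const.mul contDiffAt_id).smul hk1cd)).add
      ((contDiffAt_const.mul contDiffAt_id).smul hk2cd))
  -- differentiability of the derivative functions at 0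
  have hm00 : HasDerivAt m (m 0 * A * m 0) 0 := hmd.self_of_nhds
  have hmam : HasDerivAt (fun t => m t * A * m t)
      ((m 0 * A * m 0) * A * m 0 + (m 0 * A) * (m 0 * A * m 0)) 0 :=
    (hm00.mul_const A).mul hm00
  obtain ⟨X1, hX1⟩ : ∃ X, HasDerivAt k1d X 0 := ⟨_, hmam.mulVec' (hasDerivAt_const 0 F)⟩
  have hDf : ContDiff ℝ 2 (fderiv ℝ (Function.uncurry f)) :=
    hf.fderiv_right (by norm_num)
  have hc00 : HasDerivAt c (1, k1 0 + (0 : ℝ) • k1d 0) 0 := hccurve.self_of_nhds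
  have hPhi := ((hDf.differentiable (by norm_num)) (c 0)).hasFDerivAt.comp_hasDerivAt 0 hc00
  obtain ⟨V, hvec⟩ : ∃ V, HasDerivAt (fun t => ((1 : ℝ), k1 t + t • k1d t)) V 0 :=
    ⟨_, (hasDerivAt_const 0 (1 : ℝ)).prodMk
      ((hk1dev.self_of_nhds).add ((hasDerivAt_id 0).smul hX1))⟩
  obtain ⟨X2, hX2⟩ : ∃ X, HasDerivAt ggd X 0 := ⟨_, hPhi.clm_apply hvec⟩
  have hvvd_diff : HasDerivAt vvd (X2 - (2 : ℝ) • X1) 0 := hX2.sub (hX1.const_smul (2 : ℝ))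
  obtain ⟨X3, hX3⟩ : ∃ X, HasDerivAt k2d X 0 :=
    ⟨_, (hmam.mulVec' hvvdev.self_of_nhds).add (hm00.mulVec' hvvd_diff)⟩
  -- derivative of Ed at 0
  have hcurve2 : HasDerivAt (fun s => (tn + s, y (tn + s))) ((1 : ℝ), f (tn + 0) (y (tn + 0))) 0 := by
    refine HasDerivAt.prodMk ?_ (hyc 0)
    simpa using (hasDerivAt_id (0 : ℝ)).const_add tn
  have hw0 : HasDerivAt (fun t => f (tn + t) (y (tn + t))) w 0 := by
    have := (hfdiff ((tn + 0 : ℝ), y (tn + 0))).hasFDerivAt.comp_hasDerivAt 0 hcurve2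
    simp only [add_zero] at this
    exact this
  have a1 : HasDerivAt (fun t => (3 / 2 : ℝ) • k1 t) ((3 / 2 : ℝ) • k1d 0) 0 :=
    (hk1dev.self_of_nhds).const_smul (3 / 2 : ℝ)
  have a2 : HasDerivAt (fun t => (3 / 2 * t) • k1d t)
      ((3 / 2 * 0 : ℝ) • X1 + (3 / 2 * 1 : ℝ) • k1d 0) 0 := by
    have h := ((hasDerivAt_id 0).const_mul (3 / 2 : ℝ)).smul hX1
    simp only [id_eq] at h
    exact h
  have b1 : HasDerivAt (fun t => (1 / 2 : ℝ) • k2 t) ((1 / 2 : ℝ) • k2d 0) 0 :=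
    (hk2dev.self_of_nhds).const_smul (1 / 2 : ℝ)
  have b2 : HasDerivAt (fun t => (1 / 2 * t) • k2d t)
      ((1 / 2 * 0 : ℝ) • X3 + (1 / 2 * 1 : ℝ) • k2d 0) 0 := by
    have h := ((hasDerivAt_id 0).const_mul (1 / 2 : ℝ)).smul hX3
    simp only [id_eq] at h
    exact h
  have hEd_deriv : HasDerivAt Ed
      (w - (((3 / 2 : ℝ) • k1d 0 + ((3 / 2 * 0 : ℝ) • X1 + (3 / 2 * 1 : ℝ) • k1d 0)) +
        ((1 / 2 : ℝ) • k2d 0 + ((1 / 2 * 0 : ℝ) • X3 + (1 / 2 * 1 : ℝ) • k2d 0)))) 0 :=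
    hw0.sub ((a1.add a2).add (b1.add b2))
  have hval : (w - (((3 / 2 : ℝ) • k1d 0 + ((3 / 2 * 0 : ℝ) • X1 + (3 / 2 * 1 : ℝ) • k1d 0)) +
      ((1 / 2 : ℝ) • k2d 0 + ((1 / 2 * 0 : ℝ) • X3 + (1 / 2 * 1 : ℝ) • k2d 0)))) = 0 := by
    rw [hk1d0, hk2d0]
    simp only [mul_one, mul_zero, zero_smul, add_zero]
    module
  rw [hval] at hEd_deriv
  -- iterated derivatives vanish
  have hDE : deriv E =ᶠ[nhds (0 : ℝ)] Ed := hEdev.mono fun t ht => ht.deriv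
  have hIt1 : iteratedDeriv 1 E 0 = 0 := by
    rw [iteratedDeriv_one, hEdev.self_of_nhds.deriv, hEd0]
  have hIt2 : iteratedDeriv 2 E 0 = 0 := by
    rw [show (2 : ℕ) = 1 + 1 from rfl, iteratedDeriv_succ, iteratedDeriv_one,
      hDE.deriv_eq, hEd_deriv.deriv]
  exact isBigO_cube_of_contDiffAt hEcd hE0 hIt1 hIt2

end MatrixCalc

/-- The two-stage Rosenbrock scheme ROS2 is second-order consistent for any `Â`:
the local error is `O(Δt³)` as `Δt → 0⁺`. -/
theorem ros2_second_order_consistent {N : ℕ}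
    (f : ℝ → (Fin N → ℝ) → Fin N → ℝ)
    (hf : ContDiff ℝ 3 (Function.uncurry f))
    (Ahat : Matrix (Fin N) (Fin N) ℝ) (γ : ℝ)
    (tn : ℝ) (y : ℝ → Fin N → ℝ)
    (hy : ∀ t : ℝ, HasDerivAt y (f t (y t)) t) :
    (fun Δt : ℝ =>
      let k1 := ((1 : Matrix (Fin N) (Fin N) ℝ) - (γ * Δt) • Ahat)⁻¹.mulVec (f tn (y tn))
      let k2 := ((1 : Matrix (Fin N) (Fin N) ℝ) - (γ * Δt) • Ahat)⁻¹.mulVec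
        (f (tn + Δt) (y tn + Δt • k1) - (2 : ℝ) • k1)
      y (tn + Δt) - (y tn + (3 / 2 * Δt) • k1 + (1 / 2 * Δt) • k2))
      =O[nhdsWithin 0 (Set.Ioi 0)] fun Δt : ℝ => Δt ^ 3 := by
  exact ros2_main f hf Ahat γ tn y hy
end

section
/- If A V_k = V_{k+1} H̄_k is an Arnoldi decomposition (H̄_k ∈ ℝ^{(k+1)×k} upper Hessenberg, V_{k+1} orthonormal columns), then the residual of the Krylov approximation to y' = −Ay + g, y(0)=0 with y_k(t) = V_k u(t), u' = −H_k u + βe₁, u(0)=0, satisfies r_k(t) = −h_{k+1,k} [u(t)]_k · v_{k+1}, so ‖r_k(t)‖ = h_{k+1,k} |[u(t)]_k|, computable from the small problem alone. -/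
open scoped Matrix

/-- Euclidean norm of a vector in `ℝ^N`. -/
noncomputable def euclidNorm {N : ℕ} (v : Fin N → ℝ) : ℝ :=
  ‖(WithLp.equiv 2 (Fin N → ℝ)).symm v‖

/-- With an Arnoldi decomposition `A V_k = V_k H_k + h_{k+1,k} v_{k+1} e_kᵀ`, the residual
of the Krylov approximation to `y' = −Ay + g`, `y(0) = 0` equals
`r_k(t) = −h_{k+1,k}[u(t)]_k v_{k+1}`, with norm `h_{k+1,k}|[u(t)]_k|`. -/
theorem arnoldi_residual_formula {N k : ℕ}
    (A : Matrix (Fin N) (Fin N) ℝ)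
    (Vk : Matrix (Fin N) (Fin (k + 1)) ℝ)
    (Hk : Matrix (Fin (k + 1)) (Fin (k + 1)) ℝ)
    (h : ℝ) (hh : 0 ≤ h) (vnext : Fin N → ℝ)
    (g : Fin N → ℝ) (hg : g ≠ 0)
    (hArn : A * Vk = Vk * Hk +
      h • Matrix.vecMulVec vnext (Pi.single (Fin.last k) (1 : ℝ)))
    (horth : Vkᵀ * Vk = 1)
    (hVv : Vkᵀ.mulVec vnext = 0) (hvnorm : euclidNorm vnext = 1)
    (hcol : ∀ i : Fin N, Vk i 0 = g i / euclidNorm g)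
    (hHk : Hk = Vkᵀ * A * Vk)
    (u : ℝ → Fin (k + 1) → ℝ)
    (hu : ∀ t : ℝ, HasDerivAt u
      (-(Hk.mulVec (u t)) + euclidNorm g • (Pi.single (0 : Fin (k + 1)) (1 : ℝ) : Fin (k + 1) → ℝ)) t)
    (hu0 : u 0 = 0)
    (rk : ℝ → Fin N → ℝ)
    (hrk : ∀ t : ℝ, rk t = -(A.mulVec (Vk.mulVec (u t))) + g -
      Vk.mulVec (-(Hk.mulVec (u t)) +
        euclidNorm g • (Pi.single (0 : Fin (k + 1)) (1 : ℝ) : Fin (k + 1) → ℝ))) :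
    ∀ t : ℝ, rk t = (-(h * u t (Fin.last k))) • vnext ∧
      euclidNorm (rk t) = h * |u t (Fin.last k)| := by
  intro t
  have hβ : euclidNorm g ≠ 0 := by
    simpa [euclidNorm, norm_eq_zero] using
      fun hz : ((WithLp.equiv 2 (Fin N → ℝ)).symm g) = 0 => hg (by simpa using hz)
  have e1 : Vk.mulVec (euclidNorm g • (Pi.single (0 : Fin (k + 1)) (1 : ℝ) : Fin (k + 1) → ℝ)) = g := by
    funext i
    simp only [Matrix.mulVec, dotProduct, Pi.smul_apply, Pi.single_apply, smul_eq_mul,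
      mul_ite, mul_one, mul_zero, Finset.sum_ite_eq', Finset.mem_univ, if_true]
    rw [hcol i]
    field_simp
  have e2 : (Matrix.vecMulVec vnext (Pi.single (Fin.last k) (1 : ℝ))).mulVec (u t)
      = u t (Fin.last k) • vnext := by
    funext i
    simp only [Matrix.mulVec, dotProduct, Matrix.vecMulVec_apply, Pi.single_apply,
      Pi.smul_apply, smul_eq_mul, mul_ite, mul_one, mul_zero, ite_mul, zero_mul]
    rw [Finset.sum_ite_eq' Finset.univ (Fin.last k) (fun j => vnext i * u t j)]
    simp [mul_comm]
  have key : rk t = (-(h * u t (Fin.last k))) • vnext := by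
    rw [hrk t, Matrix.mulVec_mulVec, hArn, Matrix.add_mulVec, Matrix.smul_mulVec, e2,
      Matrix.mulVec_add, e1, Matrix.mulVec_neg, Matrix.mulVec_mulVec]
    funext i
    simp [mul_comm, mul_assoc, mul_left_comm]
  refine ⟨key, ?_⟩
  rw [key]
  have : ((WithLp.equiv 2 (Fin N → ℝ)).symm ((-(h * u t (Fin.last k))) • vnext))
      = (-(h * u t (Fin.last k))) • (WithLp.equiv 2 (Fin N → ℝ)).symm vnext := rfl
  rw [euclidNorm, this, norm_smul]
  simp only [Real.norm_eq_abs, abs_neg, abs_mul, abs_of_nonneg hh]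
  rw [show ‖(WithLp.equiv 2 (Fin N → ℝ)).symm vnext‖ = euclidNorm vnext from rfl, hvnorm, mul_one]
end
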